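/- Let (F_ν) denote the 0-based Fibonacci numbers. Then for every integer n ≥ 2, (n-2)·2^{n-2} + n ≤ F_{2n-1}, and for every integer n ≥ 9, (n-2)·2^{n-2} + n ≤ F_{2n-2}. -/

import Mathlib

lemma fib_key : ∀ k : ℕ, (k+19)*2^(k+19) ≤ Nat.fib (2*k+36) ∧ (k+19)*2^(k+20) ≤ Nat.fib (2*k+37) := by
  intro k
  induction k with
  | zero => constructor <;> norm_num [show Nat.fib 36 = 14930352 by rfl, show Nat.fib 37 = 24157817 by rfl]
  | succ k ih =>
    obtain ⟨ha, hb⟩ := ih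
    have f38 : Nat.fib (2*k+38) = Nat.fib (2*k+36) + Nat.fib (2*k+37) := by
      rw [show 2*k+38 = (2*k+36)+2 by ring, show 2*k+37 = (2*k+36)+1 by ring]
      exact Nat.fib_add_two
    have f39 : Nat.fib (2*k+39) = Nat.fib (2*k+37) + Nat.fib (2*k+38) := by
      rw [show 2*k+39 = (2*k+37)+2 by ring, show 2*k+38 = (2*k+37)+1 by ring]
      exact Nat.fib_add_two
    have h1 : (k+1+19)*2^(k+1+19) ≤ Nat.fib (2*k+38) := by
      calc (k+1+19)*2^(k+1+19) = (2*(k+19)+2)*2^(k+19) := by ring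
        _ ≤ 3*(k+19)*2^(k+19) := by nlinarith [Nat.one_le_two_pow (n := k+19)]
        _ = (k+19)*2^(k+19) + (k+19)*2^(k+20) := by ring
        _ ≤ Nat.fib (2*k+36) + Nat.fib (2*k+37) := by omega
        _ = Nat.fib (2*k+38) := f38.symm
    have h2 : (k+1+19)*2^(k+1+20) ≤ Nat.fib (2*k+39) := by
      calc (k+1+19)*2^(k+1+20) = (4*(k+19)+4)*2^(k+19) := by ring
        _ ≤ 5*(k+19)*2^(k+19) := by nlinarith [Nat.one_le_two_pow (n := k+19)]
        _ = (k+19)*2^(k+19) + (k+19)*2^(k+20) + (k+19)*2^(k+20) := by ring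
        _ ≤ Nat.fib (2*k+39) := by omega
    constructor
    · have : 2*(k+1)+36 = 2*k+38 := by ring
      rw [this]; exact h1
    · have : 2*(k+1)+37 = 2*k+39 := by ring
      rw [this]; exact h2

theorem n_two_pow_le_fib :
    (∀ n : ℕ, 2 ≤ n → (n - 2) * 2 ^ (n - 2) + n ≤ Nat.fib (2 * n - 1)) ∧
    (∀ n : ℕ, 9 ≤ n → (n - 2) * 2 ^ (n - 2) + n ≤ Nat.fib (2 * n - 2)) := by
  have big : ∀ n : ℕ, 19 ≤ n → (n - 2) * 2 ^ (n - 2) + n ≤ Nat.fib (2 * n - 2) := by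
    intro n hn
    obtain ⟨k, rfl⟩ : ∃ k, n = k + 19 := ⟨n - 19, by omega⟩
    have hk := (fib_key k).1
    have e : 2*(k+19) - 2 = 2*k+36 := by omega
    rw [e]
    refine le_trans ?_ hk
    have e2 : k + 19 - 2 = k + 17 := by omega
    rw [e2]
    have : (k+19) ≤ (k+19) * 2^(k+17) := Nat.le_mul_of_pos_right _ (Nat.pow_pos (by norm_num))
    calc (k+17) * 2^(k+17) + (k+19) ≤ (k+17)*2^(k+17) + (k+19)*2^(k+17) := by omega
      _ ≤ (2*(k+19))*2^(k+17) := by nlinarith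
      _ ≤ (k+19)*2^(k+19) := by
          have : 2^(k+19) = 4 * 2^(k+17) := by ring
          rw [this]; nlinarith
  constructor
  · intro n hn
    by_cases h : n ≤ 18
    · interval_cases n <;> decide
    · have hb := big n (by omega)
      have hm : Nat.fib (2*n-2) ≤ Nat.fib (2*n-1) := Nat.fib_le_fib_succ.trans_eq (by congr 1; omega) |>.trans_eq rfl
      omega
  · intro n hn
    by_cases h : n ≤ 18
    · interval_cases n <;> decide
    · exact big n (by omega)
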